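/- Let F : 2^V → ℝ be submodular with F(∅)=0, let s* be the minimizer of ∑_{i∈V} log(1+exp(−s_i)) over B(F), and define approximate marginals p_i = σ(−s*_i) = 1/(1+exp(s*_i)). Then thresholding the marginals at 1/2 recovers the MAP: { v : p_v > 1/2 } and { v : p_v ≥ 1/2 } are the unique minimal and maximal minimizers of F. -/

import Mathlib

/-- A set function is submodular iff it has diminishing marginal gains. -/
def Submodular {V : Type*} [DecidableEq V] (F : Finset V → ℝ) : Prop :=
  ∀ A B : Finset V, A ⊆ B → ∀ x ∉ B,
    F (insert x B) - F B ≤ F (insert x A) - F A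

/-- The base polytope `B(F)` of a normalized submodular function. -/
def basePolytope {V : Type*} [Fintype V] [DecidableEq V] (F : Finset V → ℝ) :
    Set (V → ℝ) :=
  {s | (∀ A : Finset V, ∑ i ∈ A, s i ≤ F A) ∧ ∑ i : V, s i = F Finset.univ}

noncomputable def stmt6phi (t : ℝ) : ℝ := Real.log (1 + Real.exp (-t))

lemma stmt6phi_hasDeriv (t : ℝ) :
    HasDerivAt stmt6phi (-Real.exp (-t) / (1 + Real.exp (-t))) t := by
  have h1 : HasDerivAt (fun t : ℝ => 1 + Real.exp (-t)) (-Real.exp (-t)) t := by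
    have := (Real.hasDerivAt_exp (-t)).comp t (hasDerivAt_neg t)
    simpa using (this.const_add 1)
  have hpos : 1 + Real.exp (-t) > 0 := by positivity
  have := (Real.hasDerivAt_log hpos.ne').comp t h1
  show HasDerivAt (Real.log ∘ fun t => 1 + Real.exp (-t)) _ t
  simpa [stmt6phi, Function.comp, div_eq_inv_mul, mul_comm, neg_div] using this

lemma stmt6phi_deriv_eq (t : ℝ) : deriv stmt6phi t = -(1 / (Real.exp t + 1)) := by
  rw [(stmt6phi_hasDeriv t).deriv]
  have h : Real.exp t > 0 := Real.exp_pos t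
  rw [Real.exp_neg]
  field_simp

lemma stmt6phi_strictConvexOn : StrictConvexOn ℝ Set.univ stmt6phi := by
  apply StrictMonoOn.strictConvexOn_of_deriv convex_univ
  · exact fun t _ => (stmt6phi_hasDeriv t).differentiableAt.continuousAt.continuousWithinAt
  · intro a _ b _ hab
    rw [stmt6phi_deriv_eq, stmt6phi_deriv_eq]
    have : Real.exp a + 1 < Real.exp b + 1 := by
      have := Real.exp_lt_exp.2 hab; linarith
    have h1 : 0 < Real.exp a + 1 := by positivity
    have := one_div_lt_one_div_of_lt h1 this
    linarith

lemma stmt6phi_two_point (a b t : ℝ) (hab : a < b) (ht : 0 < t) (ht2 : t ≤ (b - a) / 2) :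
    stmt6phi (a + t) + stmt6phi (b - t) < stmt6phi a + stmt6phi b := by
  set l := t / (b - a) with hl
  have hba : 0 < b - a := by linarith
  have hl0 : 0 < l := div_pos ht hba
  have hl1 : l ≤ 1/2 := by rw [hl, div_le_div_iff₀ hba (by norm_num : (0:ℝ) < 2)]; linarith
  have hlin1 : a + t = (1 - l) * a + l * b := by rw [hl]; field_simp; ring
  have hlin2 : b - t = l * a + (1 - l) * b := by rw [hl]; field_simp; ring
  have h1 := stmt6phi_strictConvexOn.2 (Set.mem_univ a) (Set.mem_univ b) hab.ne
      (by linarith : (0:ℝ) < 1 - l) hl0 (by ring)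
  have h2 := stmt6phi_strictConvexOn.2 (Set.mem_univ a) (Set.mem_univ b) hab.ne
      hl0 (by linarith : (0:ℝ) < 1 - l) (by ring)
  simp only [smul_eq_mul] at h1 h2
  rw [← hlin1] at h1
  rw [← hlin2] at h2
  linarith

section Stmt6

variable {V : Type*} [Fintype V] [DecidableEq V] {F : Finset V → ℝ}

lemma stmt6_step (hsub : Submodular F) :
    ∀ (X C D : Finset V), C ⊆ D → (∀ x ∈ X, x ∉ D) →
      F (D ∪ X) - F D ≤ F (C ∪ X) - F C := by
  intro X
  induction X using Finset.induction_on with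
  | empty => simp
  | @insert x X hx ih =>
    intro C D hCD hXD
    have hxD : x ∉ D := hXD x (Finset.mem_insert_self x X)
    have hxDX : x ∉ D ∪ X := by simp [hxD, hx]
    have h1 := hsub (C ∪ X) (D ∪ X) (Finset.union_subset_union hCD (le_refl X)) x hxDX
    have h2 := ih C D hCD (fun y hy => hXD y (Finset.mem_insert_of_mem hy))
    rw [Finset.union_insert, Finset.union_insert]
    linarith

lemma stmt6_pair (hsub : Submodular F) (A B : Finset V) :
    F (A ∪ B) + F (A ∩ B) ≤ F A + F B := by
  have h := stmt6_step hsub (B \ A) (A ∩ B) A Finset.inter_subset_left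
    (fun x hx => (Finset.mem_sdiff.1 hx).2)
  rw [Finset.union_sdiff_self_eq_union] at h
  have hB : (A ∩ B) ∪ (B \ A) = B := by
    ext y; simp [Finset.mem_sdiff, Finset.mem_inter, Finset.mem_union]; tauto
  rw [hB] at h
  linarith

variable {s : V → ℝ}

lemma stmt6_tight_ui (hsub : Submodular F) (hfeas : ∀ A : Finset V, ∑ i ∈ A, s i ≤ F A)
    {A B : Finset V} (hA : ∑ i ∈ A, s i = F A) (hB : ∑ i ∈ B, s i = F B) :
    (∑ i ∈ A ∪ B, s i = F (A ∪ B)) ∧ (∑ i ∈ A ∩ B, s i = F (A ∩ B)) := by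
  have h1 := stmt6_pair hsub A B
  have h2 := Finset.sum_union_inter (s₁ := A) (s₂ := B) (f := s)
  have h3 := hfeas (A ∪ B)
  have h4 := hfeas (A ∩ B)
  constructor <;> linarith

/-- The key exchange/optimality lemma: if every tight set containing `u`
contains `w`, then `s w ≤ s u`. -/
lemma stmt6_key (hs : s ∈ basePolytope F)
    (hmin : ∀ z ∈ basePolytope F,
      ∑ i : V, Real.log (1 + Real.exp (-(s i)))
        ≤ ∑ i : V, Real.log (1 + Real.exp (-(z i))))
    (u w : V) (hw : ∀ A : Finset V, u ∈ A → (∑ i ∈ A, s i = F A) → w ∈ A) :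
    s w ≤ s u := by
  obtain ⟨hfeas, hsum⟩ := hs
  by_contra hcon
  push_neg at hcon
  have huw : u ≠ w := fun e => by rw [e] at hcon; exact lt_irrefl _ hcon
  set S : Finset (Finset V) :=
    Finset.univ.filter (fun A : Finset V => u ∈ A ∧ w ∉ A) with hS
  have hmemS : ∀ A : Finset V, A ∈ S ↔ (u ∈ A ∧ w ∉ A) := by
    intro A; simp [hS]
  have hSne : S.Nonempty := ⟨{u}, (hmemS {u}).2 ⟨Finset.mem_singleton_self u,
    by simp [Ne.symm huw]⟩⟩
  set ε := S.inf' hSne (fun A => F A - ∑ i ∈ A, s i) with hε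
  have hεpos : 0 < ε := by
    rw [hε, Finset.lt_inf'_iff]
    intro A hA
    obtain ⟨hu, hwA⟩ := (hmemS A).1 hA
    have hne : ∑ i ∈ A, s i ≠ F A := fun h => hwA (hw A hu h)
    have := lt_of_le_of_ne (hfeas A) hne
    linarith
  set t := min ε ((s w - s u)/2) with htdef
  have ht : 0 < t := lt_min hεpos (by linarith)
  set z : V → ℝ := fun i => s i + (if i = u then t else 0) - (if i = w then t else 0)
    with hz
  have hzsum : ∀ A : Finset V, ∑ i ∈ A, z i =
      ∑ i ∈ A, s i + (if u ∈ A then t else 0) - (if w ∈ A then t else 0) := by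
    intro A
    simp only [hz]
    rw [Finset.sum_sub_distrib, Finset.sum_add_distrib,
      Finset.sum_ite_eq' A u (fun _ => t), Finset.sum_ite_eq' A w (fun _ => t)]
  have hzmem : z ∈ basePolytope F := by
    constructor
    · intro A
      rw [hzsum A]
      by_cases hu : u ∈ A
      · by_cases hwA : w ∈ A
        · simpa [hu, hwA] using hfeas A
        · have hAS : A ∈ S := (hmemS A).2 ⟨hu, hwA⟩
          have := Finset.inf'_le (fun A => F A - ∑ i ∈ A, s i) hAS
          have htε : t ≤ ε := min_le_left _ _
          simp only [hu, hwA, if_true, if_false]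
          rw [hε] at htε
          linarith
      · have h1 := hfeas A
        by_cases hwA : w ∈ A <;> simp [hu, hwA] <;> linarith
    · rw [hzsum Finset.univ]
      simpa using hsum
  have hobj := hmin z hzmem
  -- rewrite objective
  have hzu : z u = s u + t := by simp [hz, huw]
  have hzw : z w = s w - t := by simp [hz, Ne.symm huw]
  set f : V → ℝ := fun i => stmt6phi (z i) - stmt6phi (s i) with hf
  have hsum0 : ∑ i ∈ ({u, w} : Finset V), f i = ∑ i : V, f i := by
    apply Finset.sum_subset (Finset.subset_univ _)
    intro x _ hx
    simp only [Finset.mem_insert, Finset.mem_singleton] at hx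
    push_neg at hx
    simp [hf, hz, hx.1, hx.2]
  have hpair : ∑ i ∈ ({u, w} : Finset V), f i = f u + f w := Finset.sum_pair huw
  have hlt : f u + f w < 0 := by
    have := stmt6phi_two_point (s u) (s w) t hcon ht (min_le_right _ _)
    simp only [hf, hzu, hzw]
    linarith
  have hge : (0:ℝ) ≤ ∑ i : V, f i := by
    simp only [hf, Finset.sum_sub_distrib, sub_nonneg]
    exact hobj
  rw [← hsum0, hpair] at hge
  linarith

lemma stmt6_tight_filter (hsub : Submodular F) (hF0 : F ∅ = 0)
    (hs : s ∈ basePolytope F)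
    (hmin : ∀ z ∈ basePolytope F,
      ∑ i : V, Real.log (1 + Real.exp (-(s i)))
        ≤ ∑ i : V, Real.log (1 + Real.exp (-(z i))))
    (P : V → Prop) [DecidablePred P]
    (hP : ∀ u w : V, P u → s w ≤ s u → P w) :
    ∑ i ∈ Finset.univ.filter P, s i = F (Finset.univ.filter P) := by
  obtain ⟨hfeas, hsum⟩ := hs
  -- the minimal tight set containing u
  set T : V → Finset (Finset V) := fun u =>
    Finset.univ.filter (fun A : Finset V => u ∈ A ∧ ∑ i ∈ A, s i = F A) with hT
  have hTmem : ∀ u (A : Finset V), A ∈ T u ↔ (u ∈ A ∧ ∑ i ∈ A, s i = F A) := by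
    intro u A; simp [hT]
  have hTne : ∀ u, (T u).Nonempty := fun u =>
    ⟨Finset.univ, (hTmem u _).2 ⟨Finset.mem_univ u, hsum⟩⟩
  set D : V → Finset V := fun u => (T u).inf id with hD
  -- D u is tight
  have hDtight : ∀ u, ∑ i ∈ D u, s i = F (D u) := by
    intro u
    have : ∀ t : Finset (Finset V), t.Nonempty →
        (∀ A ∈ t, ∑ i ∈ A, s i = F A) → ∑ i ∈ t.inf id, s i = F (t.inf id) := by
      intro t ht
      induction ht using Finset.Nonempty.cons_induction with
      | singleton A => simp
      | cons A t hA htne ih =>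
        intro h
        rw [Finset.inf_cons]
        have h1 := h A (Finset.mem_cons_self A t)
        have h2 := ih (fun B hB => h B (Finset.mem_cons_of_mem hB))
        have := (stmt6_tight_ui hsub hfeas h1 h2).2
        simpa [Finset.inf_eq_inter] using this
    exact this (T u) (hTne u) (fun A hA => ((hTmem u A).1 hA).2)
  have hDsub : ∀ u (A : Finset V), u ∈ A → (∑ i ∈ A, s i = F A) → D u ⊆ A := by
    intro u A hu hA
    have := Finset.inf_le (f := id) ((hTmem u A).2 ⟨hu, hA⟩)
    simpa using this
  have hDself : ∀ u, u ∈ D u := by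
    intro u
    have : ({u} : Finset V) ≤ D u := by
      apply Finset.le_inf
      intro A hA
      simpa using ((hTmem u A).1 hA).1
    simpa using this (Finset.mem_singleton_self u)
  have hkey : ∀ u, ∀ w ∈ D u, s w ≤ s u := by
    intro u w hwu
    exact stmt6_key ⟨hfeas, hsum⟩ hmin u w (fun A hu hA => hDsub u A hu hA hwu)
  -- the filter set equals the sup of the D u's
  set Am := Finset.univ.filter P with hAm
  have hsupeq : Am.sup D = Am := by
    apply le_antisymm
    · intro w hwsup
      obtain ⟨u, hu, hwu⟩ := Finset.mem_sup.1 hwsup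
      have hPu : P u := (Finset.mem_filter.1 hu).2
      exact Finset.mem_filter.2 ⟨Finset.mem_univ w, hP u w hPu (hkey u w hwu)⟩
    · intro u hu
      exact (Finset.le_sup (f := D) hu) (hDself u)
  have hsuptight : ∀ (t : Finset V), (∀ a ∈ t, ∑ i ∈ D a, s i = F (D a)) →
      ∑ i ∈ t.sup D, s i = F (t.sup D) := by
    intro t
    induction t using Finset.induction_on with
    | empty => intro _; simpa using hF0.symm
    | @insert a t ha ih =>
      intro h
      rw [Finset.sup_insert]
      have h1 := h a (Finset.mem_insert_self a t)
      have h2 := ih (fun b hb => h b (Finset.mem_insert_of_mem hb))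
      have := (stmt6_tight_ui hsub hfeas h1 h2).1
      simpa [Finset.sup_eq_union] using this
  have := hsuptight Am (fun a _ => hDtight a)
  rwa [hsupeq] at this

end Stmt6

/-- if `s*` minimizes `∑ log(1+exp(-sᵢ))` over `B(F)` and
`pᵥ = 1/(1+exp(s*ᵥ))` are the approximate marginals, then thresholding the
marginals at `1/2` recovers the MAP: `{v : pᵥ > 1/2}` and `{v : pᵥ ≥ 1/2}` are
the unique minimal and maximal minimizers of `F`. -/
theorem stmt_6 {V : Type*} [Fintype V] [DecidableEq V]
    (F : Finset V → ℝ) (hsub : Submodular F) (hF0 : F ∅ = 0)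
    (s : V → ℝ) (hs : s ∈ basePolytope F)
    (hmin : ∀ z ∈ basePolytope F,
      ∑ i : V, Real.log (1 + Real.exp (-(s i)))
        ≤ ∑ i : V, Real.log (1 + Real.exp (-(z i))))
    (p : V → ℝ) (hp : ∀ v, p v = 1 / (1 + Real.exp (s v))) :
    (∀ A : Finset V, F (Finset.univ.filter fun v => 1/2 < p v) ≤ F A) ∧
    (∀ A : Finset V, F (Finset.univ.filter fun v => 1/2 ≤ p v) ≤ F A) ∧
    (∀ A : Finset V, (∀ C : Finset V, F A ≤ F C) →
      (Finset.univ.filter fun v => 1/2 < p v) ⊆ A ∧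
      A ⊆ (Finset.univ.filter fun v => 1/2 ≤ p v)) := by
  obtain ⟨hfeas, hsum⟩ := hs
  -- translate the filters into sign conditions on s
  have hplt : ∀ v, (1/2 < p v ↔ s v < 0) := by
    intro v
    rw [hp v]
    have he : 0 < Real.exp (s v) := Real.exp_pos _
    rw [div_lt_div_iff₀ (by norm_num) (by positivity)]
    constructor
    · intro h
      rw [← Real.exp_lt_one_iff]
      linarith
    · intro h
      have := Real.exp_lt_one_iff.2 h
      linarith
  have hple : ∀ v, (1/2 ≤ p v ↔ s v ≤ 0) := by
    intro v
    rw [hp v]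
    have he : 0 < Real.exp (s v) := Real.exp_pos _
    rw [div_le_div_iff₀ (by norm_num) (by positivity)]
    constructor
    · intro h
      rw [← Real.exp_le_one_iff]
      linarith
    · intro h
      have := Real.exp_le_one_iff.2 h
      linarith
  have hsetm : (Finset.univ.filter fun v => 1/2 < p v)
      = (Finset.univ.filter fun v => s v < 0) := by
    apply Finset.filter_congr; intro v _; simpa using hplt v
  have hsetp : (Finset.univ.filter fun v => 1/2 ≤ p v)
      = (Finset.univ.filter fun v => s v ≤ 0) := by
    apply Finset.filter_congr; intro v _; simpa using hple v
  set Am := Finset.univ.filter (fun v => s v < 0) with hAmdef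
  set Ap := Finset.univ.filter (fun v => s v ≤ 0) with hApdef
  have hAmtight : ∑ i ∈ Am, s i = F Am :=
    stmt6_tight_filter hsub hF0 ⟨hfeas, hsum⟩ hmin _ (fun u w hu hw => lt_of_le_of_lt hw hu)
  have hAptight : ∑ i ∈ Ap, s i = F Ap :=
    stmt6_tight_filter hsub hF0 ⟨hfeas, hsum⟩ hmin _ (fun u w hu hw => le_trans hw hu)
  -- basic sum comparison facts
  have hsum_lower : ∀ (A B : Finset V), (∀ i ∈ B \ A, s i ≤ 0) →
      (∀ i ∈ A \ B, 0 ≤ s i) → ∑ i ∈ B, s i ≤ ∑ i ∈ A, s i := by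
    intro A B h1 h2
    have e1 : ∑ i ∈ A, s i = ∑ i ∈ A ∩ B, s i + ∑ i ∈ A \ B, s i :=
      (Finset.sum_inter_add_sum_sdiff A B s).symm
    have e2 : ∑ i ∈ B, s i = ∑ i ∈ B ∩ A, s i + ∑ i ∈ B \ A, s i :=
      (Finset.sum_inter_add_sum_sdiff B A s).symm
    rw [Finset.inter_comm] at e2
    have p1 : ∑ i ∈ B \ A, s i ≤ 0 := Finset.sum_nonpos h1
    have p2 : (0:ℝ) ≤ ∑ i ∈ A \ B, s i := Finset.sum_nonneg h2
    linarith
  have hminm : ∀ A : Finset V, F Am ≤ F A := by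
    intro A
    have h1 : ∑ i ∈ Am, s i ≤ ∑ i ∈ A, s i := by
      apply hsum_lower
      · intro i hi
        have := (Finset.mem_filter.1 (Finset.mem_sdiff.1 hi).1).2
        linarith
      · intro i hi
        have := (Finset.mem_sdiff.1 hi).2
        simp only [hAmdef, Finset.mem_filter, Finset.mem_univ, true_and, not_lt] at this
        exact this
    calc F Am = ∑ i ∈ Am, s i := hAmtight.symm
      _ ≤ ∑ i ∈ A, s i := h1
      _ ≤ F A := hfeas A
  have hminp : ∀ A : Finset V, F Ap ≤ F A := by
    intro A
    have h1 : ∑ i ∈ Ap, s i ≤ ∑ i ∈ A, s i := by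
      apply hsum_lower
      · intro i hi
        exact (Finset.mem_filter.1 (Finset.mem_sdiff.1 hi).1).2
      · intro i hi
        have := (Finset.mem_sdiff.1 hi).2
        simp only [hApdef, Finset.mem_filter, Finset.mem_univ, true_and, not_le] at this
        linarith
    calc F Ap = ∑ i ∈ Ap, s i := hAptight.symm
      _ ≤ ∑ i ∈ A, s i := h1
      _ ≤ F A := hfeas A
  refine ⟨by rw [hsetm]; exact hminm, by rw [hsetp]; exact hminp, ?_⟩
  intro A hAmin
  rw [hsetm, hsetp]
  constructor
  · -- Am ⊆ A
    have hsp := stmt6_pair hsub A Am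
    have h1 : F A ≤ F (A ∪ Am) := hAmin _
    have h2 : F (A ∩ Am) ≤ F Am := by linarith
    have h3 : ∑ i ∈ A ∩ Am, s i ≤ F (A ∩ Am) := hfeas _
    have e2 : ∑ i ∈ Am, s i = ∑ i ∈ Am ∩ A, s i + ∑ i ∈ Am \ A, s i :=
      (Finset.sum_inter_add_sum_sdiff Am A s).symm
    rw [Finset.inter_comm] at e2
    have h4 : (0:ℝ) ≤ ∑ i ∈ Am \ A, s i := by linarith [hAmtight]
    by_contra hc
    rw [← Finset.sdiff_eq_empty_iff_subset] at hc
    have hne : (Am \ A).Nonempty := Finset.nonempty_iff_ne_empty.2 hc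
    have : ∑ i ∈ Am \ A, s i < 0 := by
      apply Finset.sum_neg _ hne
      intro i hi
      exact (Finset.mem_filter.1 (Finset.mem_sdiff.1 hi).1).2
    linarith
  · -- A ⊆ Ap
    have hsp := stmt6_pair hsub A Ap
    have h1 : F Ap ≤ F (A ∩ Ap) := hminp _
    have h2 : F (A ∪ Ap) ≤ F A := by linarith
    have h3 : ∑ i ∈ A ∪ Ap, s i ≤ F (A ∪ Ap) := hfeas _
    have e2 : ∑ i ∈ A ∪ Ap, s i = ∑ i ∈ Ap, s i + ∑ i ∈ A \ Ap, s i := by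
      rw [Finset.union_comm, ← Finset.sum_union Finset.disjoint_sdiff]
      congr 1
      rw [Finset.union_sdiff_self_eq_union, Finset.union_comm]
    have h4 : ∑ i ∈ A \ Ap, s i ≤ 0 := by
      have h5 := hAmin Ap
      linarith [hAptight]
    by_contra hc
    rw [← Finset.sdiff_eq_empty_iff_subset] at hc
    have hne : (A \ Ap).Nonempty := Finset.nonempty_iff_ne_empty.2 hc
    have : 0 < ∑ i ∈ A \ Ap, s i := by
      apply Finset.sum_pos _ hne
      intro i hi
      have := (Finset.mem_sdiff.1 hi).2
      simp only [hApdef, Finset.mem_filter, Finset.mem_univ, true_and, not_le] at this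
      exact this
    linarith
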